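/- Let X be a δ-hyperbolic geodesic metric space, let f ∈ Isom(X) be a hyperbolic isometry with repelling fixed point A_- ∈ ∂X, let x ∈ X, set A = { f^n x : n ∈ ℤ } and, for z ∈ X, let π_z = { x' ∈ A : d(x',z) = inf_{a ∈ A} d(a,z) }. Let U_- be a neighborhood of A_- in X̄. Then there exists M_0 ∈ ℤ such that for every z ∈ X with z ∉ U_- and every m ∈ ℤ with f^m x ∈ π_z, we have m ≥ M_0. -/

import Mathlib

open Filter Metric Set

noncomputable section

universe u

variable {X : Type u} [MetricSpace X]

/-- The Gromov product `(x·y)_w = ½(d(x,w) + d(w,y) − d(x,y))`. -/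
def gromovProduct (w x y : X) : ℝ := (dist x w + dist w y - dist x y) / 2

/-- `γ` is a geodesic from `x` to `y`, parametrized by arc length on `[0, dist x y]`. -/
structure IsGeodesicSegment (γ : ℝ → X) (x y : X) : Prop where
  source : γ 0 = x
  target : γ (dist x y) = y
  isom : ∀ ⦃s t : ℝ⦄, s ∈ Set.Icc (0 : ℝ) (dist x y) → t ∈ Set.Icc (0 : ℝ) (dist x y) →
    dist (γ s) (γ t) = |s - t|

/-- A geodesic metric space is `δ`-hyperbolic: every pair of points is joined by a
geodesic, every geodesic triangle is `δ`-slim, every geodesic triangle has insize at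
most `δ`, and the Gromov product is `δ`-hyperbolic. -/
structure IsDeltaHyperbolic (X : Type u) [MetricSpace X] (δ : ℝ) : Prop where
  delta_nonneg : 0 ≤ δ
  geodesic : ∀ x y : X, ∃ γ : ℝ → X, IsGeodesicSegment γ x y
  slim : ∀ (x y z : X) (α β γ : ℝ → X),
    IsGeodesicSegment α y z → IsGeodesicSegment β z x → IsGeodesicSegment γ x y →
    ∀ s ∈ Set.Icc (0 : ℝ) (dist y z),
      (∃ t ∈ Set.Icc (0 : ℝ) (dist z x), dist (α s) (β t) ≤ δ) ∨
      (∃ t ∈ Set.Icc (0 : ℝ) (dist x y), dist (α s) (γ t) ≤ δ)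
  insize : ∀ (x y z : X) (α β γ : ℝ → X),
    IsGeodesicSegment α y z → IsGeodesicSegment β z x → IsGeodesicSegment γ x y →
    dist (α (gromovProduct y x z)) (β (gromovProduct z x y)) ≤ δ ∧
    dist (β (gromovProduct z x y)) (γ (gromovProduct x y z)) ≤ δ ∧
    dist (γ (gromovProduct x y z)) (α (gromovProduct y x z)) ≤ δ
  gromov : ∀ w x y z : X,
    min (gromovProduct w x y) (gromovProduct w y z) - δ ≤ gromovProduct w x z

/-- An isometry `f` of `X` is hyperbolic if for every `x ∈ X` there is `t > 0` with
`t|m − n| ≤ d(f^m x, f^n x)` for all integers `m, n`. -/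
def IsHyperbolicIsometry (f : X ≃ᵢ X) : Prop :=
  ∀ x : X, ∃ t : ℝ, 0 < t ∧
    ∀ m n : ℤ, t * |(m : ℝ) - (n : ℝ)| ≤ dist ((f ^ m) x) ((f ^ n) x)

/-- A sequence converges to infinity if the Gromov products `(x_i·x_j)_w → ∞`. -/
def ConvergesToInfinity (w : X) (u : ℕ → X) : Prop :=
  Tendsto (fun p : ℕ × ℕ => gromovProduct w (u p.1) (u p.2)) atTop atTop

/-- Two sequences are equivalent if the mixed Gromov products tend to infinity. -/
def SeqEquiv (w : X) (u v : ℕ → X) : Prop :=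
  Tendsto (fun p : ℕ × ℕ => gromovProduct w (u p.1) (v p.2)) atTop atTop

/-- Sequences converging to infinity. -/
def BoundarySeq (w : X) : Type u := {u : ℕ → X // ConvergesToInfinity w u}

/-- The Gromov boundary `∂X`: equivalence classes of sequences converging to infinity. -/
def GromovBoundary (w : X) : Type u :=
  Quot (fun u v : BoundarySeq w => SeqEquiv w u.1 v.1)

/-- The boundary point determined by a sequence converging to infinity. -/
def boundaryPt (w : X) (u : BoundarySeq w) : GromovBoundary w := Quot.mk _ u

/-- `X̄ = X ∪ ∂X`. -/
def GromovClosure (w : X) : Type u := X ⊕ GromovBoundary w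

theorem gromovProduct_basepoint_ge (w w' x y : X) :
    gromovProduct w x y - dist w w' ≤ gromovProduct w' x y := by
  have h1 : |dist w' x - dist w x| ≤ dist w' w := abs_dist_sub_le w' w x
  have h2 : |dist w' y - dist w y| ≤ dist w' w := abs_dist_sub_le w' w y
  rw [abs_le] at h1 h2
  unfold gromovProduct
  rw [dist_comm x w', dist_comm x w, dist_comm w w']
  linarith [h1.1, h1.2, h2.1, h2.2]

theorem gromovProduct_isometry (f : X ≃ᵢ X) (w x y : X) :
    gromovProduct w (f x) (f y) = gromovProduct (f.symm w) x y := by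
  unfold gromovProduct
  conv_lhs => rw [show w = f (f.symm w) from (f.apply_symm_apply w).symm]
  rw [f.dist_eq, f.dist_eq, f.dist_eq]

theorem convergesToInfinity_isometry {w : X} (f : X ≃ᵢ X) {u : ℕ → X}
    (h : ConvergesToInfinity w u) :
    ConvergesToInfinity w (fun n => f (u n)) := by
  refine tendsto_atTop_mono (fun p => ?_)
    (tendsto_atTop_add_const_right atTop (-dist w (f.symm w)) h)
  have h1 := gromovProduct_basepoint_ge w (f.symm w) (u p.1) (u p.2)
  have h2 := gromovProduct_isometry f w (u p.1) (u p.2)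
  dsimp only
  linarith

theorem seqEquiv_isometry {w : X} (f : X ≃ᵢ X) {u v : ℕ → X}
    (h : SeqEquiv w u v) :
    SeqEquiv w (fun n => f (u n)) (fun n => f (v n)) := by
  refine tendsto_atTop_mono (fun p => ?_)
    (tendsto_atTop_add_const_right atTop (-dist w (f.symm w)) h)
  have h1 := gromovProduct_basepoint_ge w (f.symm w) (u p.1) (v p.2)
  have h2 := gromovProduct_isometry f w (u p.1) (v p.2)
  dsimp only
  linarith

/-- The extension of an isometry of `X` to the Gromov boundary. -/
def boundaryMap (w : X) (f : X ≃ᵢ X) : GromovBoundary w → GromovBoundary w :=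
  Quot.lift
    (fun u : BoundarySeq w =>
      boundaryPt w ⟨fun n => f (u.1 n), convergesToInfinity_isometry f u.2⟩)
    (fun _ _ h => Quot.sound (seqEquiv_isometry f h))

/-- The extension of an isometry of `X` to `X̄ = X ∪ ∂X`. -/
def closureMap (w : X) (f : X ≃ᵢ X) : GromovClosure w → GromovClosure w
  | Sum.inl x => Sum.inl (f x)
  | Sum.inr a => Sum.inr (boundaryMap w f a)

/-- The Gromov product of a boundary point with a point of `X̄`, extended by
taking infima of liminfs over representative sequences. -/
noncomputable def boundaryGP (w : X) (a : GromovBoundary w) : GromovClosure w → ℝ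
  | Sum.inl p => sInf {r : ℝ | ∃ u : BoundarySeq w, boundaryPt w u = a ∧
      r = Filter.liminf (fun n => gromovProduct w (u.1 n) p) atTop}
  | Sum.inr b => sInf {r : ℝ | ∃ u v : BoundarySeq w, boundaryPt w u = a ∧
      boundaryPt w v = b ∧
      r = Filter.liminf (fun n => gromovProduct w (u.1 n) (v.1 n)) atTop}

/-- The basis for the topology on `X̄`: open balls in `X`, and the sets
`N(â,k) = {y : (â·y)_w > k}` for boundary points `â` and `k > 0`. -/
def closureBasis (w : X) : Set (Set (GromovClosure w)) :=
  {S | (∃ (x : X) (r : ℝ), 0 < r ∧ S = Sum.inl '' Metric.ball x r) ∨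
       (∃ (a : GromovBoundary w) (k : ℝ), 0 < k ∧ S = {y | k < boundaryGP w a y})}

/-- The topology on `X̄` generated by the basis above. -/
def closureTop (w : X) : TopologicalSpace (GromovClosure w) :=
  TopologicalSpace.generateFrom (closureBasis w)

/-- `S ⊆ X̄` is a neighborhood of `p ∈ X̄`. -/
def IsNeighborhood (w : X) (S : Set (GromovClosure w)) (p : GromovClosure w) : Prop :=
  S ∈ @nhds (GromovClosure w) (closureTop w) p

/-- `a ∈ ∂X` is the attracting fixed point of `f`: it is represented by the
sequence `(f^n x)` for a point `x ∈ X`. -/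
def IsAttractingFixedPt (w : X) (f : X ≃ᵢ X) (a : GromovBoundary w) : Prop :=
  ∃ (x : X) (h : ConvergesToInfinity w (fun n : ℕ => (f ^ (n : ℤ)) x)),
    boundaryPt w ⟨fun n : ℕ => (f ^ (n : ℤ)) x, h⟩ = a

/-- `a ∈ ∂X` is the repelling fixed point of `f`: the attracting fixed point of `f⁻¹`. -/
def IsRepellingFixedPt (w : X) (f : X ≃ᵢ X) (a : GromovBoundary w) : Prop :=
  IsAttractingFixedPt w f⁻¹ a

/-- The concatenation `α · (f α)` of a path `α` defined on `[0, L]` with its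
image under `f`, parametrized on `[0, 2L]`. -/
noncomputable def concatPath (f : X ≃ᵢ X) (α : ℝ → X) (L : ℝ) : ℝ → X :=
  fun s => if s ≤ L then α s else f (α (s - L))

theorem gp_nonneg (w x y : X) : 0 ≤ gromovProduct w x y := by
  have := dist_triangle x w y; unfold gromovProduct; linarith

theorem gp_comm (w x y : X) : gromovProduct w x y = gromovProduct w y x := by
  unfold gromovProduct; rw [dist_comm x w, dist_comm w y, dist_comm x y]; ring

theorem gp_le_snd (w x y : X) : gromovProduct w x y ≤ dist w y := by
  have h : dist x w ≤ dist x y + dist w y := by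
    rw [dist_comm w y]; exact dist_triangle x y w
  unfold gromovProduct; linarith

theorem gp_lip (w x y z : X) : gromovProduct w x z - dist x y ≤ gromovProduct w y z := by
  have h1 := abs_dist_sub_le x y w
  have h2 := abs_dist_sub_le y x z
  rw [abs_le] at h1 h2
  have h3 : dist y x = dist x y := dist_comm y x
  unfold gromovProduct
  linarith [h1.1, h1.2, h2.1, h2.2]

theorem liminf_nonneg' {f : ℕ → ℝ} (h : ∀ n, 0 ≤ f n) : 0 ≤ liminf f atTop := by
  rw [liminf_eq]
  by_cases hb : BddAbove {a | ∀ᶠ n in atTop, a ≤ f n}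
  · exact le_csSup hb (by filter_upwards with n using h n)
  · rw [Real.sSup_of_not_bddAbove hb]

theorem le_liminf_of_bdd {f : ℕ → ℝ} {M b : ℝ} (hM : ∀ n, f n ≤ M)
    (h : ∀ᶠ n in atTop, b ≤ f n) : b ≤ liminf f atTop := by
  rw [liminf_eq]
  refine le_csSup ⟨M, fun a ha => ?_⟩ h
  obtain ⟨n, hn⟩ := ha.exists
  exact hn.trans (hM n)

theorem frequently_lt_of_liminf_lt' {f : ℕ → ℝ} {M c : ℝ} (hM : ∀ n, f n ≤ M)
    (h : liminf f atTop < c) : ∃ᶠ n in atTop, f n < c := by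
  by_contra hc
  rw [not_frequently] at hc
  have : c ≤ liminf f atTop :=
    le_liminf_of_bdd hM (hc.mono fun n hn => not_lt.mp hn)
  linarith

theorem liminf_le_of_lt' {f : ℕ → ℝ} {k : ℝ} (hk : 0 ≤ k)
    (h : ∀ n, f n < k + 1 / (n + 1)) : liminf f atTop ≤ k := by
  rw [liminf_eq]
  refine Real.sSup_le (fun a ha => ?_) hk
  by_contra hak
  push_neg at hak
  obtain ⟨N, hN⟩ := exists_nat_one_div_lt (sub_pos.mpr hak)
  have hev : ∀ᶠ n : ℕ in atTop, 1 / ((n : ℝ) + 1) < a - k := by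
    refine eventually_atTop.mpr ⟨N, fun n hn => lt_of_le_of_lt ?_ hN⟩
    apply one_div_le_one_div_of_le
    · positivity
    · have : (N : ℝ) ≤ (n : ℝ) := by exact_mod_cast hn
      linarith
  obtain ⟨n, hn1, hn2⟩ := (ha.and hev).exists
  have := h n
  linarith

theorem tendsto_pair_iff {f : ℕ × ℕ → ℝ} :
    Tendsto f atTop atTop ↔ ∀ K : ℝ, ∃ N : ℕ, ∀ i ≥ N, ∀ j ≥ N, K ≤ f (i, j) := by
  rw [tendsto_atTop_atTop]
  constructor
  · intro h K
    obtain ⟨N, hN⟩ := h K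
    exact ⟨max N.1 N.2, fun i hi j hj =>
      hN (i, j) ⟨le_trans (le_max_left _ _) hi, le_trans (le_max_right _ _) hj⟩⟩
  · intro h K
    obtain ⟨N, hN⟩ := h K
    exact ⟨(N, N), fun p hp => hN p.1 hp.1 p.2 hp.2⟩

theorem convInf_iff {w : X} {u : ℕ → X} :
    ConvergesToInfinity w u ↔
      ∀ K : ℝ, ∃ N : ℕ, ∀ i ≥ N, ∀ j ≥ N, K ≤ gromovProduct w (u i) (u j) :=
  tendsto_pair_iff

theorem seqEquiv_iff {w : X} {u v : ℕ → X} :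
    SeqEquiv w u v ↔
      ∀ K : ℝ, ∃ N : ℕ, ∀ i ≥ N, ∀ j ≥ N, K ≤ gromovProduct w (u i) (v j) :=
  tendsto_pair_iff

theorem seqEquiv_symm' {w : X} {u v : ℕ → X} (h : SeqEquiv w u v) : SeqEquiv w v u := by
  rw [seqEquiv_iff] at h ⊢
  intro K
  obtain ⟨N, hN⟩ := h K
  exact ⟨N, fun i hi j hj => (gp_comm w (v i) (u j)) ▸ hN j hj i hi⟩

theorem seqEquiv_trans' {δ : ℝ} (hX : IsDeltaHyperbolic X δ) {w : X} {u v s : ℕ → X}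
    (h1 : SeqEquiv w u v) (h2 : SeqEquiv w v s) : SeqEquiv w u s := by
  rw [seqEquiv_iff] at h1 h2 ⊢
  intro K
  obtain ⟨N1, hN1⟩ := h1 (K + δ)
  obtain ⟨N2, hN2⟩ := h2 (K + δ)
  refine ⟨max N1 N2, fun i hi j hj => ?_⟩
  have g := hX.gromov w (u i) (v (max N1 N2)) (s j)
  have a1 := hN1 i (le_trans (le_max_left _ _) hi) (max N1 N2) (le_max_left _ _)
  have a2 := hN2 (max N1 N2) (le_max_right _ _) j (le_trans (le_max_right _ _) hj)
  have := le_min a1 a2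
  linarith

theorem seqEquiv_of_boundaryPt_eq {δ : ℝ} (hX : IsDeltaHyperbolic X δ) {w : X}
    {u v : BoundarySeq w} (h : boundaryPt w u = boundaryPt w v) : SeqEquiv w u.1 v.1 := by
  have h' : Quot.mk (fun a b : BoundarySeq w => SeqEquiv w a.1 b.1) u
      = Quot.mk (fun a b : BoundarySeq w => SeqEquiv w a.1 b.1) v := h
  have h2 := Quot.eq.mp h'
  clear h h'
  induction h2 with
  | rel a b hab => exact hab
  | refl a => exact a.2
  | symm a b _ ih => exact seqEquiv_symm' ih
  | trans a b c _ _ ih1 ih2 => exact seqEquiv_trans' hX ih1 ih2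

/-- For a hyperbolic isometry `f` with repelling fixed point `A₋`
and a neighborhood `U₋` of `A₋` in `X̄`, there is `M₀ ∈ ℤ` such that whenever
`z ∉ U₋` and `f^m x` is a point of the orbit `A = {fⁿx}` nearest to `z`,
we have `m ≥ M₀`. -/
theorem nearest_orbit_point_bounded_below (δ : ℝ) (hX : IsDeltaHyperbolic X δ) (w : X)
    (f : X ≃ᵢ X) (hf : IsHyperbolicIsometry f)
    (Aminus : GromovBoundary w) (hAm : IsRepellingFixedPt w f Aminus)
    (x : X)
    (Uminus : Set (GromovClosure w))
    (hUm : IsNeighborhood w Uminus (Sum.inr Aminus)) :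
    ∃ M0 : ℤ, ∀ z : X, Sum.inl z ∉ Uminus →
      ∀ m : ℤ,
        dist ((f ^ m) x) z = sInf {d : ℝ | ∃ k : ℤ, d = dist ((f ^ k) x) z} →
        M0 ≤ m := by
  by_contra hcon
  push_neg at hcon
  choose z hz m hm hml using fun j : ℕ => hcon (-(j : ℤ))
  obtain ⟨t, ht, htd⟩ := hf x
  obtain ⟨x0, h0, hx0⟩ := hAm
  have hK1 : ∀ k : ℤ, t * |(k : ℝ)| ≤ dist ((f ^ k) x) x := by
    intro k
    have h := htd k 0
    simpa using h
  set v : ℕ → X := fun n => (f ^ (-(n : ℤ))) x with hvdef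
  have hdv0 : ∀ n : ℕ, dist (v n) ((f⁻¹ ^ (n : ℤ)) x0) = dist x x0 := by
    intro n
    have hrw : (f⁻¹ ^ (n : ℤ)) x0 = (f ^ (-(n : ℤ))) x0 := by rw [inv_zpow, zpow_neg]
    rw [hrw]
    exact (f ^ (-(n : ℤ))).dist_eq x x0
  have hK2 : ∀ K : ℝ, ∃ N : ℕ, ∀ i ≥ N, ∀ j ≥ N, K ≤ gromovProduct w (v i) (v j) := by
    intro K
    obtain ⟨N, hN⟩ := convInf_iff.mp h0 (K + 2 * dist x x0)
    refine ⟨N, fun i hi j hj => ?_⟩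
    have hA : K + 2 * dist x x0 ≤
        gromovProduct w ((f⁻¹ ^ (i : ℤ)) x0) ((f⁻¹ ^ (j : ℤ)) x0) := hN i hi j hj
    have b1 := gp_lip w ((f⁻¹ ^ (i : ℤ)) x0) (v i) ((f⁻¹ ^ (j : ℤ)) x0)
    have b2 := gp_lip w ((f⁻¹ ^ (j : ℤ)) x0) (v j) (v i)
    have c1 := gp_comm w (v i) ((f⁻¹ ^ (j : ℤ)) x0)
    have c2 := gp_comm w (v i) (v j)
    have d1 : dist ((f⁻¹ ^ (i : ℤ)) x0) (v i) = dist x x0 := by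
      rw [dist_comm]; exact hdv0 i
    have d2 : dist ((f⁻¹ ^ (j : ℤ)) x0) (v j) = dist x x0 := by
      rw [dist_comm]; exact hdv0 j
    linarith
  have hnj1 : ∀ j : ℕ, (f ^ (m j)) x = v ((-(m j)).toNat) := by
    intro j
    have h0' : (0 : ℤ) ≤ -(m j) := by have := hml j; omega
    have he : ((((-(m j)).toNat : ℕ)) : ℤ) = -(m j) := Int.toNat_of_nonneg h0'
    have he2 : (-((((-(m j)).toNat : ℕ)) : ℤ)) = m j := by rw [he]; ring
    show (f ^ (m j)) x = (f ^ (-((((-(m j)).toNat : ℕ)) : ℤ))) x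
    rw [he2]
  have hnj2 : ∀ j : ℕ, (j : ℤ) < ((((-(m j)).toNat : ℕ)) : ℤ) := by
    intro j
    have h1 := hml j
    omega
  have habs : ∀ j : ℕ, |(m j : ℝ)| = ((((-(m j)).toNat : ℕ)) : ℝ) := by
    intro j
    have hmneg : m j < 0 := by have := hml j; omega
    have h0' : ((((-(m j)).toNat : ℕ)) : ℤ) = -(m j) := Int.toNat_of_nonneg (by omega)
    have hc : (m j : ℝ) < 0 := by exact_mod_cast hmneg
    rw [abs_of_neg hc]
    exact_mod_cast h0'.symm
  have hK3 : ∀ j : ℕ,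
      (t * |(m j : ℝ)| - 2 * dist x w) / 2 ≤ gromovProduct w ((f ^ (m j)) x) (z j) := by
    intro j
    have hS : dist ((f ^ (m j)) x) (z j) ≤ dist x (z j) := by
      rw [hm j]
      have hb : BddBelow {d : ℝ | ∃ k : ℤ, d = dist ((f ^ k) x) (z j)} := by
        refine ⟨0, ?_⟩
        rintro d ⟨k, rfl⟩
        exact dist_nonneg
      have hmem : dist x (z j) ∈ {d : ℝ | ∃ k : ℤ, d = dist ((f ^ k) x) (z j)} := by
        refine ⟨0, ?_⟩
        simp
      exact csInf_le hb hmem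
    have h1 := hK1 (m j)
    have h2 := dist_triangle ((f ^ (m j)) x) w x
    have h3 := dist_triangle x w (z j)
    have h4 : dist w x = dist x w := dist_comm w x
    unfold gromovProduct
    linarith
  have hK4 : ∀ K : ℝ, ∃ N : ℕ, ∀ i ≥ N, ∀ j ≥ N, K ≤ gromovProduct w (v i) (z j) := by
    intro K
    obtain ⟨N1, hN1⟩ := hK2 (K + δ)
    refine ⟨max N1 ⌈(2 * (K + δ) + 2 * dist x w) / t⌉₊, fun i hi j hj => ?_⟩
    have hjn : j < (-(m j)).toNat := by
      have := hnj2 j; exact_mod_cast this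
    have hnN1 : N1 ≤ (-(m j)).toNat :=
      le_trans (le_trans (le_max_left _ _) hj) hjn.le
    have a1 : K + δ ≤ gromovProduct w (v i) (v ((-(m j)).toNat)) :=
      hN1 i (le_trans (le_max_left _ _) hi) _ hnN1
    have hceil : (2 * (K + δ) + 2 * dist x w) / t ≤ (((-(m j)).toNat : ℕ) : ℝ) := by
      have hnn : ⌈(2 * (K + δ) + 2 * dist x w) / t⌉₊ ≤ (-(m j)).toNat :=
        le_trans (le_trans (le_max_right _ _) hj) hjn.le
      have hnn' : ((⌈(2 * (K + δ) + 2 * dist x w) / t⌉₊ : ℕ) : ℝ)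
          ≤ (((-(m j)).toNat : ℕ) : ℝ) := by exact_mod_cast hnn
      exact le_trans (Nat.le_ceil _) hnn'
    have htn : 2 * (K + δ) + 2 * dist x w ≤ t * (((-(m j)).toNat : ℕ) : ℝ) := by
      rw [div_le_iff₀ ht] at hceil
      linarith
    have a2 : K + δ ≤ gromovProduct w (v ((-(m j)).toNat)) (z j) := by
      have h3 := hK3 j
      rw [hnj1 j, habs j] at h3
      linarith
    have g := hX.gromov w (v i) (v ((-(m j)).toNat)) (z j)
    linarith [le_min a1 a2]
  have hK5 : ∀ K : ℝ, ∃ N : ℕ, ∀ i ≥ N, ∀ j ≥ N, K ≤ gromovProduct w (z i) (z j) := by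
    intro K
    obtain ⟨N, hN⟩ := hK4 (K + δ)
    refine ⟨N, fun i hi j hj => ?_⟩
    have a1 : K + δ ≤ gromovProduct w (z i) (v N) := by
      rw [gp_comm]; exact hN N le_rfl i hi
    have a2 : K + δ ≤ gromovProduct w (v N) (z j) := hN N le_rfl j hj
    have g := hX.gromov w (z i) (v N) (z j)
    linarith [le_min a1 a2]
  have hK6 : ∀ K : ℝ, ∃ N : ℕ, ∀ i ≥ N, ∀ j ≥ N,
      K ≤ gromovProduct w ((f⁻¹ ^ (i : ℤ)) x0) (z j) := by
    intro K
    obtain ⟨N, hN⟩ := hK4 (K + dist x x0)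
    refine ⟨N, fun i hi j hj => ?_⟩
    have b := gp_lip w (v i) ((f⁻¹ ^ (i : ℤ)) x0) (z j)
    have d1 := hdv0 i
    have a := hN i hi j hj
    linarith
  have hzconv : ConvergesToInfinity w z := convInf_iff.mpr hK5
  have htend : Tendsto (fun j : ℕ => (Sum.inl (z j) : GromovClosure w)) atTop
      (@nhds _ (closureTop w) (Sum.inr Aminus)) := by
    show Tendsto _ atTop (@nhds (GromovClosure w)
      (TopologicalSpace.generateFrom (closureBasis w)) (Sum.inr Aminus))
    refine TopologicalSpace.tendsto_nhds_generateFrom_iff.mpr fun s hsg hsA => ?_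
    rcases hsg with ⟨x1, r, hr, rfl⟩ | ⟨a, k, hk, rfl⟩
    · exact absurd hsA (by rintro ⟨y, _, hy⟩; exact Sum.inl_ne_inr hy)
    · have hsA' : k < boundaryGP w a (Sum.inr Aminus) := hsA
      show ∀ᶠ j in atTop, k < boundaryGP w a (Sum.inl (z j))
      by_contra hfr
      rw [not_eventually] at hfr
      obtain ⟨φ, hφmono, hφ⟩ := Filter.extraction_of_frequently_atTop
        (hfr.mono fun j hj => not_lt.mp hj)
      -- hφ : ∀ n, boundaryGP w a (Sum.inl (z (φ n))) ≤ k
      obtain ⟨ua, hua⟩ := Quot.exists_rep a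
      have hua' : boundaryPt w ua = a := hua
      have hstep : ∀ n : ℕ, ∃ u : BoundarySeq w, boundaryPt w u = a ∧
          liminf (fun i => gromovProduct w (u.1 i) (z (φ n))) atTop < k + 1 / (n + 1) := by
        intro n
        have hne : {r : ℝ | ∃ u : BoundarySeq w, boundaryPt w u = a ∧
            r = liminf (fun i => gromovProduct w (u.1 i) (z (φ n))) atTop}.Nonempty :=
          ⟨_, ua, hua', rfl⟩
        have hlt : sInf {r : ℝ | ∃ u : BoundarySeq w, boundaryPt w u = a ∧
            r = liminf (fun i => gromovProduct w (u.1 i) (z (φ n))) atTop}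
            < k + 1 / (n + 1) := by
          have h1 : boundaryGP w a (Sum.inl (z (φ n))) ≤ k := hφ n
          have h2 : (0 : ℝ) < 1 / ((n : ℝ) + 1) := by positivity
          calc sInf {r : ℝ | ∃ u : BoundarySeq w, boundaryPt w u = a ∧
              r = liminf (fun i => gromovProduct w (u.1 i) (z (φ n))) atTop} ≤ k := h1
            _ < k + 1 / (n + 1) := by linarith
        obtain ⟨r, ⟨u, hu1, rfl⟩, hr⟩ := exists_lt_of_csInf_lt hne hlt
        exact ⟨u, hu1, hr⟩
      choose un hun hliminf using hstep
      have hfreq : ∀ n : ℕ, ∃ᶠ i in atTop,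
          gromovProduct w ((un n).1 i) (z (φ n)) < k + 1 / (n + 1) := fun n =>
        frequently_lt_of_liminf_lt' (fun i => gp_le_snd w _ _) (hliminf n)
      have heqa : ∀ n : ℕ, SeqEquiv w ua.1 (un n).1 := fun n =>
        seqEquiv_of_boundaryPt_eq hX (hua'.trans (hun n).symm)
      have hB1 : ∀ n : ℕ, ∃ B : ℕ, ∀ l ≥ B, ∀ i ≥ B,
          (n : ℝ) ≤ gromovProduct w (ua.1 l) ((un n).1 i) := fun n =>
        seqEquiv_iff.mp (heqa n) n
      choose B1 hB1' using hB1
      have hpick : ∀ n : ℕ, ∃ i, i ≥ B1 n ∧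
          gromovProduct w ((un n).1 i) (z (φ n)) < k + 1 / (n + 1) := by
        intro n
        obtain ⟨i, hi1, hi2⟩ := frequently_atTop.mp (hfreq n) (B1 n)
        exact ⟨i, hi1, hi2⟩
      choose iidx hiB hival using hpick
      have hanchor : ∀ n : ℕ, ∀ L ≥ B1 n,
          (n : ℝ) ≤ gromovProduct w (ua.1 L) ((un n).1 (iidx n)) := fun n L hL =>
        hB1' n L hL (iidx n) (hiB n)
      have hUconv : ConvergesToInfinity w (fun n => (un n).1 (iidx n)) := by
        refine convInf_iff.mpr fun K => ⟨⌈K + δ⌉₊, fun n hn n' hn' => ?_⟩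
        have hKn : K + δ ≤ (n : ℝ) := le_trans (Nat.le_ceil _) (by exact_mod_cast hn)
        have hKn' : K + δ ≤ (n' : ℝ) := le_trans (Nat.le_ceil _) (by exact_mod_cast hn')
        have a1 : (n : ℝ) ≤ gromovProduct w (ua.1 (max (B1 n) (B1 n')))
            ((un n).1 (iidx n)) := hanchor n _ (le_max_left _ _)
        have a2 : (n' : ℝ) ≤ gromovProduct w (ua.1 (max (B1 n) (B1 n')))
            ((un n').1 (iidx n')) := hanchor n' _ (le_max_right _ _)
        have a1' : K + δ ≤ gromovProduct w ((un n).1 (iidx n))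
            (ua.1 (max (B1 n) (B1 n'))) := by
          rw [gp_comm]; linarith
        have a2' : K + δ ≤ gromovProduct w (ua.1 (max (B1 n) (B1 n')))
            ((un n').1 (iidx n')) := by linarith
        have g := hX.gromov w ((un n).1 (iidx n)) (ua.1 (max (B1 n) (B1 n')))
          ((un n').1 (iidx n'))
        linarith [le_min a1' a2']
      have hUa : SeqEquiv w ua.1 (fun n => (un n).1 (iidx n)) := by
        refine seqEquiv_iff.mpr fun K => ?_
        obtain ⟨Na, hNa⟩ := convInf_iff.mp ua.2 (K + δ)
        refine ⟨max Na ⌈K + δ⌉₊, fun l hl n hn => ?_⟩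
        have hKn : K + δ ≤ (n : ℝ) := by
          have h1 : ⌈K + δ⌉₊ ≤ n := le_trans (le_max_right _ _) hn
          exact le_trans (Nat.le_ceil _) (by exact_mod_cast h1)
        have a1 : K + δ ≤ gromovProduct w (ua.1 l) (ua.1 (max (B1 n) Na)) :=
          hNa l (le_trans (le_max_left _ _) hl) _ (le_max_right _ _)
        have a2 : K + δ ≤ gromovProduct w (ua.1 (max (B1 n) Na))
            ((un n).1 (iidx n)) := by
          have := hanchor n _ (le_max_left (B1 n) Na)
          linarith
        have g := hX.gromov w (ua.1 l) (ua.1 (max (B1 n) Na)) ((un n).1 (iidx n))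
        linarith [le_min a1 a2]
      have hVconv : ConvergesToInfinity w (fun n => z (φ n)) := by
        refine convInf_iff.mpr fun K => ?_
        obtain ⟨N, hN⟩ := hK5 K
        exact ⟨N, fun i hi j hj =>
          hN (φ i) (le_trans hi (hφmono.le_apply)) (φ j) (le_trans hj (hφmono.le_apply))⟩
      have hVA : SeqEquiv w (fun n : ℕ => (f⁻¹ ^ (n : ℤ)) x0) (fun n => z (φ n)) := by
        refine seqEquiv_iff.mpr fun K => ?_
        obtain ⟨N, hN⟩ := hK6 K
        exact ⟨N, fun i hi j hj => hN i hi (φ j) (le_trans hj (hφmono.le_apply))⟩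
      have hUb : boundaryPt w (⟨fun n => (un n).1 (iidx n), hUconv⟩ : BoundarySeq w) = a := by
        have hq : boundaryPt w ua
            = boundaryPt w (⟨fun n => (un n).1 (iidx n), hUconv⟩ : BoundarySeq w) :=
          Quot.sound hUa
        exact hq.symm.trans hua'
      have hVb : boundaryPt w (⟨fun n => z (φ n), hVconv⟩ : BoundarySeq w) = Aminus := by
        have hq : boundaryPt w (⟨fun n : ℕ => (f⁻¹ ^ (n : ℤ)) x0, h0⟩ : BoundarySeq w)
            = boundaryPt w (⟨fun n => z (φ n), hVconv⟩ : BoundarySeq w) :=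
          Quot.sound hVA
        exact hq.symm.trans hx0
      have hmem : liminf (fun n => gromovProduct w ((un n).1 (iidx n)) (z (φ n))) atTop ∈
          {r : ℝ | ∃ u v' : BoundarySeq w, boundaryPt w u = a ∧ boundaryPt w v' = Aminus ∧
            r = liminf (fun n => gromovProduct w (u.1 n) (v'.1 n)) atTop} :=
        ⟨⟨fun n => (un n).1 (iidx n), hUconv⟩, ⟨fun n => z (φ n), hVconv⟩, hUb, hVb, rfl⟩
      have hbdd : BddBelow {r : ℝ | ∃ u v' : BoundarySeq w, boundaryPt w u = a ∧
          boundaryPt w v' = Aminus ∧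
          r = liminf (fun n => gromovProduct w (u.1 n) (v'.1 n)) atTop} := by
        refine ⟨0, ?_⟩
        rintro r ⟨u, v', _, _, rfl⟩
        exact liminf_nonneg' fun n => gp_nonneg _ _ _
      have hle : boundaryGP w a (Sum.inr Aminus)
          ≤ liminf (fun n => gromovProduct w ((un n).1 (iidx n)) (z (φ n))) atTop :=
        csInf_le hbdd hmem
      have hlk : liminf (fun n => gromovProduct w ((un n).1 (iidx n)) (z (φ n))) atTop
          ≤ k := liminf_le_of_lt' hk.le fun n => hival n
      linarith
  have hev : ∀ᶠ j in atTop, (Sum.inl (z j) : GromovClosure w) ∈ Uminus := htend hUm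
  obtain ⟨j, hj⟩ := hev.exists
  exact hz j hj
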